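/- Let μ > 0. Suppose κ : (0, 1) → ℝ is a function such that for every r ∈ (0, 1), κ(r) > 0 and (4/κ(r))·tan(κ(r)/4) = ((1 − r²/48)/(1 − 7r²/48))·(1 − κ(r)²/μ), and suppose κ(r) → 0 as r → 0⁺. Then κ(r)/r → √(6/(1 + 48/μ)) as r → 0⁺. -/

import Mathlib

open Filter Real Set
open scoped Topology

lemma tan_div_self : Tendsto (fun t => Real.tan t / t) (𝓝[>] (0:ℝ)) (𝓝 1) := by
  have h : HasDerivAt Real.tan 1 0 := by
    have := Real.hasDerivAt_tan (x := 0) (by norm_num)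
    simpa using this
  have h2 := hasDerivAt_iff_tendsto_slope.mp h
  have h3 : Tendsto (slope Real.tan 0) (𝓝[>] (0:ℝ)) (𝓝 1) :=
    h2.mono_left (nhdsWithin_mono _ (fun x hx => ne_of_gt hx))
  refine h3.congr (fun t => ?_)
  simp [slope, Real.tan_zero, div_eq_inv_mul]

lemma tan_cube : Tendsto (fun t => (Real.tan t - t) / t^3) (𝓝[>] (0:ℝ)) (𝓝 (1/3)) := by
  have hmem : Set.Ioo (0:ℝ) 1 ∈ 𝓝[>] (0:ℝ) :=
    Ioo_mem_nhdsGT_of_mem (by constructor <;> norm_num)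
  have hcos : ∀ t ∈ Set.Ioo (0:ℝ) 1, Real.cos t ≠ 0 := by
    intro t ht
    have : Real.cos t > 0 := Real.cos_pos_of_mem_Ioo
      ⟨by linarith [ht.1, Real.pi_gt_three], by linarith [ht.2, Real.pi_gt_three]⟩
    linarith
  apply HasDerivAt.lhopital_zero_nhdsGT
    (f' := fun t => 1 / Real.cos t ^ 2 - 1) (g' := fun t => 3 * t^2)
  · filter_upwards [hmem] with t ht
    exact (Real.hasDerivAt_tan (hcos t ht)).sub (hasDerivAt_id t)
  · filter_upwards with t
    simpa using (hasDerivAt_pow 3 t)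
  · filter_upwards [hmem] with t ht
    have : t ≠ 0 := ne_of_gt ht.1
    positivity
  · have h : ContinuousAt (fun t => Real.tan t - t) 0 :=
      (Real.continuousAt_tan.mpr (by norm_num : Real.cos 0 ≠ 0)).sub continuousAt_id
    have : Tendsto (fun t => Real.tan t - t) (𝓝 (0:ℝ)) (𝓝 0) := by
      simpa using h.tendsto
    exact this.mono_left nhdsWithin_le_nhds
  · have : Tendsto (fun t : ℝ => t^3) (𝓝 (0:ℝ)) (𝓝 0) := by
      simpa using (continuous_pow 3).tendsto (0:ℝ)
    exact this.mono_left nhdsWithin_le_nhds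
  · have key : Tendsto (fun t => (Real.tan t / t)^2 * (1/3)) (𝓝[>] (0:ℝ)) (𝓝 (1/3)) := by
      have := (tan_div_self.pow 2).mul_const (1/3 : ℝ)
      simpa using this
    refine key.congr' ?_
    filter_upwards [hmem] with t ht
    have ht0 : t ≠ 0 := ne_of_gt ht.1
    have hc := hcos t ht
    have htan : Real.tan t ^ 2 = 1 / Real.cos t ^ 2 - 1 := by
      rw [Real.tan_eq_sin_div_cos]
      have := Real.sin_sq_add_cos_sq t
      field_simp
      nlinarith [this]
    rw [div_pow, ← htan]
    field_simp

lemma g_lim : Tendsto (fun k => ((4/k) * Real.tan (k/4) - 1) / k^2) (𝓝[>] (0:ℝ))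
    (𝓝 (1/48)) := by
  have hq : Tendsto (fun k : ℝ => k/4) (𝓝[>] (0:ℝ)) (𝓝[>] (0:ℝ)) := by
    rw [tendsto_nhdsWithin_iff]
    constructor
    · have : Tendsto (fun k : ℝ => k/4) (𝓝 (0:ℝ)) (𝓝 (0/4)) :=
        (continuous_id.div_const 4).tendsto 0
      simpa using this.mono_left nhdsWithin_le_nhds
    · filter_upwards [self_mem_nhdsWithin] with k hk
      exact div_pos (Set.mem_Ioi.mp hk) (by norm_num)
  have key : Tendsto (fun k => (1/16 : ℝ) * ((Real.tan (k/4) - k/4) / (k/4)^3))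
      (𝓝[>] (0:ℝ)) (𝓝 (1/48)) := by
    have := (tan_cube.comp hq).const_mul (1/16 : ℝ)
    convert this using 2
    all_goals norm_num
  refine key.congr' ?_
  filter_upwards [self_mem_nhdsWithin] with k hk
  have hk0 : (k:ℝ) ≠ 0 := ne_of_gt hk
  field_simp
  ring

/-- The small root `κ(r)` of the symmetric characteristic equation satisfies
`κ(r)/r → √(6/(1 + 48/μ))` as `r → 0⁺`; that is, the exceptional macroscale
mode has `kH ≈ √(6/(1+48/μ))`. -/
theorem stmt11 (μ : ℝ) (hμ : 0 < μ) (κ : ℝ → ℝ)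
    (hpos : ∀ r ∈ Set.Ioo (0 : ℝ) 1, 0 < κ r)
    (heq : ∀ r ∈ Set.Ioo (0 : ℝ) 1,
      (4 / κ r) * Real.tan (κ r / 4)
        = ((1 - r ^ 2 / 48) / (1 - 7 * r ^ 2 / 48)) * (1 - (κ r) ^ 2 / μ))
    (hlim : Filter.Tendsto κ (nhdsWithin 0 (Set.Ioi 0)) (nhds 0)) :
    Filter.Tendsto (fun r => κ r / r) (nhdsWithin 0 (Set.Ioi 0))
      (nhds (Real.sqrt (6 / (1 + 48 / μ)))) := by
  have hμ0 : μ ≠ 0 := ne_of_gt hμ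
  have hmem : Set.Ioo (0:ℝ) 1 ∈ 𝓝[>] (0:ℝ) :=
    Ioo_mem_nhdsGT_of_mem (by constructor <;> norm_num)
  have hκ : Tendsto κ (𝓝[>] (0:ℝ)) (𝓝[>] (0:ℝ)) := by
    rw [tendsto_nhdsWithin_iff]
    exact ⟨hlim, by filter_upwards [hmem] with r hr; exact hpos r hr⟩
  set G : ℝ → ℝ := fun r => ((4/(κ r)) * Real.tan (κ r/4) - 1) / (κ r)^2 with hGdef
  have hG : Tendsto G (𝓝[>] (0:ℝ)) (𝓝 (1/48)) := g_lim.comp hκ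
  set A : ℝ → ℝ := fun r => (1 - r^2/48)/(1 - 7*r^2/48) with hAdef
  have hid : Tendsto (fun r : ℝ => r) (𝓝[>] (0:ℝ)) (𝓝 0) :=
    tendsto_id.mono_left nhdsWithin_le_nhds
  have hr2 : Tendsto (fun r : ℝ => r^2) (𝓝[>] (0:ℝ)) (𝓝 0) := by
    simpa using hid.pow 2
  have hnum : Tendsto (fun r : ℝ => 1 - r^2/48) (𝓝[>] (0:ℝ)) (𝓝 1) := by
    have h := Tendsto.sub
      (tendsto_const_nhds : Tendsto (fun _ : ℝ => (1:ℝ)) (𝓝[>] (0:ℝ)) (𝓝 1))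
      (hr2.div_const 48)
    simpa using h
  have hden1 : Tendsto (fun r : ℝ => 1 - 7*r^2/48) (𝓝[>] (0:ℝ)) (𝓝 1) := by
    have h := Tendsto.sub
      (tendsto_const_nhds : Tendsto (fun _ : ℝ => (1:ℝ)) (𝓝[>] (0:ℝ)) (𝓝 1))
      ((hr2.const_mul 7).div_const 48)
    simpa using h
  have hA : Tendsto A (𝓝[>] (0:ℝ)) (𝓝 1) := by
    have := hnum.div hden1 (by norm_num)
    rw [div_one] at this
    exact this
  have hDpos0 : (0:ℝ) < μ * (1/48) + 1 := by positivity
  have hMGA : Tendsto (fun r => μ * G r + A r) (𝓝[>] (0:ℝ)) (𝓝 (μ * (1/48) + 1)) :=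
    (hG.const_mul μ).add hA
  have hDpos : ∀ᶠ r in 𝓝[>] (0:ℝ), 0 < μ * G r + A r :=
    hMGA.eventually (eventually_gt_nhds hDpos0)
  have hDen : Tendsto (fun r => 8 * (1 - 7*r^2/48) * (μ * G r + A r)) (𝓝[>] (0:ℝ))
      (𝓝 (8 * 1 * (μ * (1/48) + 1))) :=
    ((hden1.const_mul 8).mul hMGA)
  have hDen0 : (8 : ℝ) * 1 * (μ * (1/48) + 1) ≠ 0 := by positivity
  have hΦ : Tendsto (fun r => μ / (8 * (1 - 7*r^2/48) * (μ * G r + A r))) (𝓝[>] (0:ℝ))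
      (𝓝 (μ / (8 * 1 * (μ * (1/48) + 1)))) :=
    tendsto_const_nhds.div hDen hDen0
  have hident : ∀ᶠ r in 𝓝[>] (0:ℝ),
      (κ r / r)^2 = μ / (8 * (1 - 7*r^2/48) * (μ * G r + A r)) := by
    filter_upwards [hmem, hDpos] with r hr hDr
    have hr0 : r ≠ 0 := ne_of_gt hr.1
    have hk : 0 < κ r := hpos r hr
    have hk0 : κ r ≠ 0 := ne_of_gt hk
    have hrsq : r^2 < 1 := by nlinarith [hr.1, hr.2]
    have hd : (0:ℝ) < 1 - 7*r^2/48 := by nlinarith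
    have hd0 : (1:ℝ) - 7*r^2/48 ≠ 0 := ne_of_gt hd
    have he := heq r hr
    have hGr : G r = (A r * (1 - (κ r)^2/μ) - 1) / (κ r)^2 := by
      simp only [hGdef, hAdef]
      rw [he]
    have e1 : (48:ℝ) - r^2*7 ≠ 0 := by nlinarith
    have e2 : μ*48 - μ*r^2*7 ≠ 0 := fun h => (mul_ne_zero hμ0 e1) (by linear_combination h)
    have hx : μ * ((A r * (1 - (κ r)^2/μ) - 1)/(κ r)^2) + A r = μ*(A r - 1)/(κ r)^2 := by
      field_simp
      ring
    have hA1 : A r - 1 = (r^2/8)/(1 - 7*r^2/48) := by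
      rw [hAdef]
      rw [div_sub_one hd0]
      congr 1
      ring
    have e3 : -(r^2*(κ r)^2*2688) + (κ r)^2*18432 ≠ 0 := by
      have hp : (0:ℝ) < -(r^2*(κ r)^2*2688) + (κ r)^2*18432 := by
        nlinarith [mul_pos (pow_pos hk 2) (show (0:ℝ) < 1 - r^2 by linarith)]
      exact ne_of_gt hp
    have hdk : ((1:ℝ) - 7*r^2/48) * (κ r)^2 ≠ 0 := mul_ne_zero hd0 (pow_ne_zero 2 hk0)
    have h1 : (μ * G r + A r) * ((1 - 7*r^2/48) * (κ r)^2) = μ * (r^2/8) := by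
      rw [hGr, hx, hA1]
      have hrw : μ * (r^2/8/(1 - 7*r^2/48)) / (κ r)^2
          = μ * (r^2/8) / ((1 - 7*r^2/48) * (κ r)^2) := by
        rw [mul_div_assoc, div_div, ← mul_div_assoc]
      rw [hrw, div_mul_cancel₀ _ hdk]
    have h2 : 8 * (1 - 7*r^2/48) * (μ * G r + A r) = μ * r^2 / (κ r)^2 := by
      rw [eq_div_iff (pow_ne_zero 2 hk0)]
      linear_combination 8 * h1
    rw [h2, div_div_eq_mul_div]
    field_simp
  have hsq : Tendsto (fun r => (κ r / r)^2) (𝓝[>] (0:ℝ))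
      (𝓝 (μ / (8 * 1 * (μ * (1/48) + 1)))) :=
    hΦ.congr' (hident.mono fun r h => h.symm)
  have hsqrt : Tendsto (fun r => Real.sqrt ((κ r / r)^2)) (𝓝[>] (0:ℝ))
      (𝓝 (Real.sqrt (μ / (8 * 1 * (μ * (1/48) + 1))))) :=
    (Real.continuous_sqrt.tendsto _).comp hsq
  have hLeq : μ / (8 * 1 * (μ * (1/48) + 1)) = 6 / (1 + 48/μ) := by
    have h48 : μ + 48 ≠ 0 := by positivity
    field_simp
    ring
  rw [← hLeq]
  refine hsqrt.congr' ?_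
  filter_upwards [hmem] with r hr
  have : 0 ≤ κ r / r := le_of_lt (div_pos (hpos r hr) hr.1)
  exact Real.sqrt_sq this
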